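/- arXiv:2304.02022 — 2 statements merged into one kernel-verified Lean document; each statement's English description precedes it below -/
import Mathlib

section
/- Let customers choose according to an MNL model: given an assortment S (a subset of [N]) containing product i, each customer independently purchases product j ∈ S with probability v_j/(1 + Σ_{k∈S} v_k) and makes no purchase with probability 1/(1 + Σ_{k∈S} v_k), where v_j > 0 for all j. Suppose a (possibly random, history-dependent) sequence of assortments all containing product i is offered to a sequence of customers, and let μ_i be the number of no-purchase choices that occur strictly before the first purchase of product i. Then μ_i is geometrically distributed on {0,1,2,...} with P(μ_i = μ) = (1/(1+v_i))^μ · (v_i/(1+v_i)), and in particular E[μ_i] = 1/v_i. -/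
open MeasureTheory Finset Filter
open scoped ENNReal Topology
set_option linter.unusedSectionVars false

namespace Stmt0



variable {Ω : Type*} {N : ℕ}

/-- The history of the first `n` choices. -/
def histOf (d : ℕ → Ω → Option (Fin N)) (n : ℕ) (ω : Ω) : Fin n → Option (Fin N) :=
  fun k => d k.1 ω

/-- Cylinder set: the first `n` choices are given by `h`. -/
def cyl (d : ℕ → Ω → Option (Fin N)) (n : ℕ) (h : Fin n → Option (Fin N)) : Set Ω :=
  {ω | ∀ k : Fin n, d k.1 ω = h k}

lemma mem_cyl {d : ℕ → Ω → Option (Fin N)} {n : ℕ} {h : Fin n → Option (Fin N)} {ω : Ω} :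
    ω ∈ cyl d n h ↔ histOf d n ω = h := by
  simp [cyl, histOf, funext_iff]

/-- product `i` has been purchased within the history `h`. -/
def dead (i : Fin N) {n : ℕ} (h : Fin n → Option (Fin N)) : Prop := ∃ k, h k = some i

instance (i : Fin N) {n : ℕ} (h : Fin n → Option (Fin N)) : Decidable (dead i h) := by
  unfold dead; infer_instance

/-- number of no-purchases before the first purchase of `i` in history `h`. -/
def cnt (i : Fin N) {n : ℕ} (h : Fin n → Option (Fin N)) : ℕ :=
  ∑ k : Fin n, if h k = none ∧ ∀ k' ≤ k, h k' ≠ some i then 1 else 0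

lemma histOf_succ (d : ℕ → Ω → Option (Fin N)) (n : ℕ) (ω : Ω) :
    histOf d (n + 1) ω = Fin.snoc (histOf d n ω) (d n ω) := by
  funext k
  induction k using Fin.lastCases with
  | last => simp [histOf, Fin.snoc_last]
  | cast k => simp [histOf, Fin.snoc_castSucc]

lemma cyl_zero (d : ℕ → Ω → Option (Fin N)) (h : Fin 0 → Option (Fin N)) :
    cyl d 0 h = Set.univ := by
  ext ω
  simp only [cyl, Set.mem_setOf_eq, Set.mem_univ, iff_true]
  exact fun k => k.elim0

lemma cyl_snoc (d : ℕ → Ω → Option (Fin N)) (n : ℕ) (h : Fin n → Option (Fin N))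
    (x : Option (Fin N)) :
    cyl d (n + 1) (Fin.snoc h x) = {ω | d n ω = x ∧ ∀ k : Fin n, d k.1 ω = h k} := by
  ext ω
  simp only [cyl, Set.mem_setOf_eq]
  constructor
  · intro hω
    refine ⟨?_, fun k => ?_⟩
    · have := hω (Fin.last n); simpa [Fin.snoc_last] using this
    · have := hω k.castSucc; simpa [Fin.snoc_castSucc] using this
  · rintro ⟨h1, h2⟩ k
    induction k using Fin.lastCases with
    | last => simpa [Fin.snoc_last] using h1
    | cast k => simpa [Fin.snoc_castSucc] using h2 k

lemma dead_snoc (i : Fin N) {n : ℕ} (h : Fin n → Option (Fin N)) (x : Option (Fin N)) :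
    dead i (Fin.snoc h x) ↔ dead i h ∨ x = some i := by
  constructor
  · rintro ⟨k, hk⟩
    induction k using Fin.lastCases with
    | last => right; simpa [Fin.snoc_last] using hk
    | cast k => left; exact ⟨k, by simpa [Fin.snoc_castSucc] using hk⟩
  · rintro (⟨k, hk⟩ | hx)
    · exact ⟨k.castSucc, by simpa [Fin.snoc_castSucc] using hk⟩
    · exact ⟨Fin.last n, by simpa [Fin.snoc_last] using hx⟩

lemma not_dead_iff (i : Fin N) {n : ℕ} (h : Fin n → Option (Fin N)) :
    ¬ dead i h ↔ ∀ k, h k ≠ some i := by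
  simp [dead]

lemma cnt_snoc (i : Fin N) {n : ℕ} (h : Fin n → Option (Fin N)) (x : Option (Fin N)) :
    cnt i (Fin.snoc h x) = cnt i h + (if x = none ∧ ¬ dead i h then 1 else 0) := by
  unfold cnt
  rw [Fin.sum_univ_castSucc]
  congr 1
  · apply Finset.sum_congr rfl
    intro k _
    congr 1
    apply propext
    constructor
    · rintro ⟨h1, h2⟩
      refine ⟨by simpa [Fin.snoc_castSucc] using h1, fun k' hk' => ?_⟩
      have := h2 k'.castSucc (by simpa using hk')
      simpa [Fin.snoc_castSucc] using this
    · rintro ⟨h1, h2⟩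
      refine ⟨by simpa [Fin.snoc_castSucc] using h1, fun k' hk' => ?_⟩
      induction k' using Fin.lastCases with
      | last => exact absurd (lt_of_le_of_lt hk' (Fin.castSucc_lt_last k)) (lt_irrefl _)
      | cast k' =>
          have : k' ≤ k := by simpa using hk'
          simpa [Fin.snoc_castSucc] using h2 k' this
  · congr 1
    apply propext
    constructor
    · rintro ⟨h1, h2⟩
      have hx : x = none := by simpa [Fin.snoc_last] using h1
      refine ⟨hx, ?_⟩
      rw [not_dead_iff]
      intro k
      have := h2 k.castSucc (Fin.le_last _)
      simpa [Fin.snoc_castSucc] using this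
    · rintro ⟨h1, h2⟩
      refine ⟨by simpa [Fin.snoc_last] using h1, fun k' _ => ?_⟩
      induction k' using Fin.lastCases with
      | last => simp [Fin.snoc_last, h1]
      | cast k' =>
          rw [not_dead_iff] at h2
          simpa [Fin.snoc_castSucc] using h2 k'

lemma cnt_snoc_of_dead (i : Fin N) {n : ℕ} {h : Fin n → Option (Fin N)} (hd : dead i h)
    (x : Option (Fin N)) : cnt i (Fin.snoc h x) = cnt i h := by
  simp [cnt_snoc, hd]

lemma cnt_snoc_of_ne_none (i : Fin N) {n : ℕ} (h : Fin n → Option (Fin N))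
    {x : Option (Fin N)} (hx : x ≠ none) : cnt i (Fin.snoc h x) = cnt i h := by
  simp [cnt_snoc, hx]

lemma dead_zero (i : Fin N) (h : Fin 0 → Option (Fin N)) : ¬ dead i h := by
  rintro ⟨k, -⟩; exact k.elim0

lemma cnt_zero' (i : Fin N) (h : Fin 0 → Option (Fin N)) : cnt i h = 0 := by
  simp [cnt]


variable {Ω : Type*} {N : ℕ}

lemma sum_succ {β M : Type*} [Fintype β] [AddCommMonoid M] (n : ℕ)
    (F : (Fin (n + 1) → β) → M) :
    ∑ h' : Fin (n + 1) → β, F h' = ∑ h : Fin n → β, ∑ x : β, F (Fin.snoc h x) := by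
  rw [← (Fin.snocEquiv (fun _ => β)).sum_comp F, Fintype.sum_prod_type, Finset.sum_comm]
  apply Finset.sum_congr rfl; intro h _
  apply Finset.sum_congr rfl; intro x _
  rfl

section Meas

variable [MeasurableSpace Ω] (P : Measure Ω) [IsProbabilityMeasure P]
  (v : Fin N → ℝ) (i : Fin N) (d : ℕ → Ω → Option (Fin N))
  (S : (n : ℕ) → (Fin n → Option (Fin N)) → Finset (Fin N))

def Hchoice : Prop :=
  ∀ (n : ℕ) (h : Fin n → Option (Fin N)),
      (∀ j : Fin N,
        P {ω | d n ω = some j ∧ ∀ k : Fin n, d k.1 ω = h k}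
          = ENNReal.ofReal ((if j ∈ S n h then v j else 0) / (1 + ∑ k ∈ S n h, v k))
              * P {ω | ∀ k : Fin n, d k.1 ω = h k})
      ∧ P {ω | d n ω = none ∧ ∀ k : Fin n, d k.1 ω = h k}
          = ENNReal.ofReal (1 / (1 + ∑ k ∈ S n h, v k))
              * P {ω | ∀ k : Fin n, d k.1 ω = h k}

variable {P v i d S}

lemma Vpos (hv : ∀ j, 0 < v j) (n : ℕ) (h : Fin n → Option (Fin N)) :
    0 < 1 + ∑ k ∈ S n h, v k := by
  have : 0 ≤ ∑ k ∈ S n h, v k := Finset.sum_nonneg fun k _ => (hv k).le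
  linarith

lemma p_snoc_some (hc : Hchoice P v d S) (n : ℕ) (h : Fin n → Option (Fin N)) (j : Fin N) :
    P (cyl d (n + 1) (Fin.snoc h (some j)))
      = ENNReal.ofReal ((if j ∈ S n h then v j else 0) / (1 + ∑ k ∈ S n h, v k))
          * P (cyl d n h) := by
  rw [cyl_snoc]
  exact (hc n h).1 j

lemma p_snoc_none (hc : Hchoice P v d S) (n : ℕ) (h : Fin n → Option (Fin N)) :
    P (cyl d (n + 1) (Fin.snoc h none))
      = ENNReal.ofReal (1 / (1 + ∑ k ∈ S n h, v k)) * P (cyl d n h) := by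
  rw [cyl_snoc]
  exact (hc n h).2

lemma p_snoc_sum (hv : ∀ j, 0 < v j) (hc : Hchoice P v d S) (n : ℕ)
    (h : Fin n → Option (Fin N)) :
    ∑ x : Option (Fin N), P (cyl d (n + 1) (Fin.snoc h x)) = P (cyl d n h) := by
  have hV := Vpos (S := S) hv n h
  rw [Fintype.sum_option, p_snoc_none hc n h]
  have hsome : ∀ j : Fin N, P (cyl d (n + 1) (Fin.snoc h (some j)))
      = ENNReal.ofReal ((if j ∈ S n h then v j else 0) / (1 + ∑ k ∈ S n h, v k))
          * P (cyl d n h) := p_snoc_some hc n h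
  simp only [hsome]
  rw [← Finset.sum_mul, ← add_mul]
  have hnn : ∀ j ∈ (univ : Finset (Fin N)),
      0 ≤ (if j ∈ S n h then v j else 0) / (1 + ∑ k ∈ S n h, v k) := by
    intro j _
    apply div_nonneg _ hV.le
    split <;> [exact (hv j).le; rfl]
  rw [← ENNReal.ofReal_sum_of_nonneg hnn,
    ← ENNReal.ofReal_add (by positivity) (Finset.sum_nonneg hnn)]
  have : 1 / (1 + ∑ k ∈ S n h, v k)
      + ∑ j : Fin N, (if j ∈ S n h then v j else 0) / (1 + ∑ k ∈ S n h, v k) = 1 := by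
    rw [← Finset.sum_div, Finset.sum_ite_mem, Finset.univ_inter, ← add_div,
      div_self hV.ne']
  rw [this, ENNReal.ofReal_one, one_mul]

lemma sum_p (hv : ∀ j, 0 < v j) (hc : Hchoice P v d S) :
    ∀ n, ∑ h : Fin n → Option (Fin N), P (cyl d n h) = 1 := by
  intro n
  induction n with
  | zero =>
      haveI : Unique (Fin 0 → Option (Fin N)) :=
        ⟨⟨fun k => k.elim0⟩, fun f => funext fun k => k.elim0⟩
      rw [Fintype.sum_unique, cyl_zero, measure_univ]
  | succ n ih =>
      rw [sum_succ]
      rw [Finset.sum_congr rfl fun h _ => p_snoc_sum hv hc n h]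
      exact ih

lemma p_biUnion (hv : ∀ j, 0 < v j) (hc : Hchoice P v d S) (n : ℕ)
    (A : Finset (Fin n → Option (Fin N))) :
    P (⋃ h ∈ A, cyl d n h) = ∑ h ∈ A, P (cyl d n h) := by
  refine le_antisymm (measure_biUnion_finset_le A _) ?_
  have hcover : (⋃ h ∈ A, cyl d n h) ∪ (⋃ h ∈ Aᶜ, cyl d n h) = Set.univ := by
    apply Set.eq_univ_of_forall
    intro ω
    by_cases hA : histOf d n ω ∈ A
    · exact Or.inl (Set.mem_biUnion hA (mem_cyl.2 rfl))
    · exact Or.inr (Set.mem_biUnion (Finset.mem_compl.2 hA) (mem_cyl.2 rfl))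
  have h1 : (1 : ℝ≥0∞) ≤ P (⋃ h ∈ A, cyl d n h) + ∑ h ∈ Aᶜ, P (cyl d n h) := by
    calc (1 : ℝ≥0∞) = P Set.univ := (measure_univ).symm
    _ = P ((⋃ h ∈ A, cyl d n h) ∪ (⋃ h ∈ Aᶜ, cyl d n h)) := by rw [hcover]
    _ ≤ P (⋃ h ∈ A, cyl d n h) + P (⋃ h ∈ Aᶜ, cyl d n h) := measure_union_le _ _
    _ ≤ _ := by gcongr; exact measure_biUnion_finset_le _ _
  have hsum : ∑ h ∈ A, P (cyl d n h) + ∑ h ∈ Aᶜ, P (cyl d n h) = 1 := by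
    rw [Finset.sum_add_sum_compl, sum_p hv hc]
  have hne : ∑ h ∈ Aᶜ, P (cyl d n h) ≠ ⊤ := by
    intro htop
    rw [htop, add_top] at hsum
    exact (by simp : (⊤ : ℝ≥0∞) ≠ 1) hsum
  rw [← hsum] at h1
  exact (ENNReal.add_le_add_iff_right hne).1 h1

/-- probability that `i` was purchased in the first `n` steps with exactly `m`
no-purchases before. -/
noncomputable def pD (P : Measure Ω) (i : Fin N) (d : ℕ → Ω → Option (Fin N)) (n m : ℕ) : ℝ≥0∞ :=
  ∑ h : Fin n → Option (Fin N), if dead i h ∧ cnt i h = m then P (cyl d n h) else 0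

noncomputable def pG (P : Measure Ω) (i : Fin N) (d : ℕ → Ω → Option (Fin N)) (n m : ℕ) : ℝ≥0∞ :=
  ∑ h : Fin n → Option (Fin N), if m ≤ cnt i h then P (cyl d n h) else 0

noncomputable def pA (P : Measure Ω) (i : Fin N) (d : ℕ → Ω → Option (Fin N)) (n m : ℕ) : ℝ≥0∞ :=
  ∑ h : Fin n → Option (Fin N), if ¬ dead i h ∧ cnt i h = m then P (cyl d n h) else 0

noncomputable def pAl (P : Measure Ω) (i : Fin N) (d : ℕ → Ω → Option (Fin N)) (n : ℕ) : ℝ≥0∞ :=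
  ∑ h : Fin n → Option (Fin N), if ¬ dead i h then P (cyl d n h) else 0

noncomputable def pY (P : Measure Ω) (i : Fin N) (d : ℕ → Ω → Option (Fin N)) (n m : ℕ) : ℝ≥0∞ :=
  ∑ h : Fin n → Option (Fin N),
    if ¬ dead i h ∧ cnt i h = m then P (cyl d (n + 1) (Fin.snoc h none)) else 0

lemma p_snoc_some_i (hv : ∀ j, 0 < v j) (hc : Hchoice P v d S) (hiS : ∀ n h, i ∈ S n h)
    (n : ℕ) (h : Fin n → Option (Fin N)) :
    P (cyl d (n + 1) (Fin.snoc h (some i)))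
      = ENNReal.ofReal (v i) * P (cyl d (n + 1) (Fin.snoc h none)) := by
  rw [p_snoc_some hc n h i, p_snoc_none hc n h, if_pos (hiS n h), ← mul_assoc,
    ← ENNReal.ofReal_mul (hv i).le, mul_one_div]

lemma pD_succ (hv : ∀ j, 0 < v j) (hc : Hchoice P v d S) (n m : ℕ) :
    pD P i d (n + 1) m = pD P i d n m
      + ∑ h : Fin n → Option (Fin N),
          if ¬ dead i h ∧ cnt i h = m then P (cyl d (n + 1) (Fin.snoc h (some i))) else 0 := by
  unfold pD
  rw [sum_succ, ← Finset.sum_add_distrib]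
  apply Finset.sum_congr rfl
  intro h _
  by_cases hd : dead i h
  · have hds : ∀ x, dead i (Fin.snoc h x) := fun x => (dead_snoc i h x).2 (Or.inl hd)
    by_cases hm : cnt i h = m
    · rw [if_pos (⟨hd, hm⟩ : dead i h ∧ cnt i h = m),
        if_neg (by rintro ⟨h', -⟩; exact h' hd), add_zero,
        Finset.sum_congr rfl fun x _ => if_pos ⟨hds x, by rw [cnt_snoc_of_dead i hd, hm]⟩]
      exact p_snoc_sum hv hc n h
    · rw [if_neg (by rintro ⟨-, h'⟩; exact hm h'), if_neg (by rintro ⟨-, h'⟩; exact hm h'),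
        add_zero]
      apply Finset.sum_eq_zero
      intro x _
      apply if_neg
      rintro ⟨-, hcx⟩
      rw [cnt_snoc_of_dead i hd] at hcx
      exact hm hcx
  · by_cases hm : cnt i h = m
    · rw [if_neg (by rintro ⟨h', -⟩; exact hd h'), if_pos ⟨hd, hm⟩, zero_add]
      refine (Fintype.sum_eq_single (some i) ?_).trans ?_
      · intro x hx
        apply if_neg
        rintro ⟨hdx, -⟩
        rcases (dead_snoc i h x).1 hdx with h' | h'
        · exact hd h'
        · exact hx h'
      · exact if_pos ⟨(dead_snoc i h _).2 (Or.inr rfl),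
          by rw [cnt_snoc_of_ne_none i h (by simp), hm]⟩
    · rw [if_neg (by rintro ⟨-, h'⟩; exact hm h'), if_neg (by rintro ⟨-, h'⟩; exact hm h'),
        add_zero]
      apply Finset.sum_eq_zero
      intro x _
      apply if_neg
      rintro ⟨hdx, hcx⟩
      rcases (dead_snoc i h x).1 hdx with h' | h'
      · exact hd h'
      · subst h'
        rw [cnt_snoc_of_ne_none i h (by simp)] at hcx
        exact hm hcx

lemma pG_succ (hv : ∀ j, 0 < v j) (hc : Hchoice P v d S) (n m : ℕ) :
    pG P i d (n + 1) (m + 1) = pG P i d n (m + 1) + pY P i d n m := by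
  unfold pG pY
  rw [sum_succ, ← Finset.sum_add_distrib]
  apply Finset.sum_congr rfl
  intro h _
  by_cases h1 : m + 1 ≤ cnt i h
  · rw [if_pos h1, if_neg (by rintro ⟨-, hm⟩; omega), add_zero]
    have : ∀ x : Option (Fin N), m + 1 ≤ cnt i (Fin.snoc h x) := by
      intro x
      rw [cnt_snoc]
      exact le_trans h1 (Nat.le_add_right _ _)
    simp only [this, if_true]
    exact p_snoc_sum hv hc n h
  · rw [if_neg h1, zero_add]
    by_cases h2 : ¬ dead i h ∧ cnt i h = m
    · rw [if_pos h2]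
      refine (Fintype.sum_eq_single none ?_).trans ?_
      · intro x hx
        apply if_neg
        rw [cnt_snoc_of_ne_none i h hx]
        exact h1
      · rw [if_pos]
        rw [cnt_snoc, if_pos ⟨rfl, h2.1⟩, h2.2]
    · rw [if_neg h2]
      apply Finset.sum_eq_zero
      intro x _
      apply if_neg
      rw [cnt_snoc]
      intro hle
      by_cases hxn : x = none ∧ ¬ dead i h
      · rw [if_pos hxn] at hle
        have : cnt i h = m := by omega
        exact h2 ⟨hxn.2, this⟩
      · rw [if_neg hxn] at hle
        omega

lemma pY_eq (hv : ∀ j, 0 < v j) (hc : Hchoice P v d S) (hiS : ∀ n h, i ∈ S n h) (n m : ℕ) :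
    (∑ h : Fin n → Option (Fin N),
        if ¬ dead i h ∧ cnt i h = m then P (cyl d (n + 1) (Fin.snoc h (some i))) else 0)
      = ENNReal.ofReal (v i) * pY P i d n m := by
  unfold pY
  rw [Finset.mul_sum]
  apply Finset.sum_congr rfl
  intro h _
  rw [mul_ite, mul_zero, p_snoc_some_i hv hc hiS n h]

lemma pDG (hv : ∀ j, 0 < v j) (hc : Hchoice P v d S) (hiS : ∀ n h, i ∈ S n h) (n m : ℕ) :
    pD P i d n m = ENNReal.ofReal (v i) * pG P i d n (m + 1) := by
  induction n with
  | zero =>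
      have h1 : pD P i d 0 m = 0 := by
        apply Finset.sum_eq_zero
        intro h _
        exact if_neg (by rintro ⟨hd, -⟩; exact dead_zero i h hd)
      have h2 : pG P i d 0 (m + 1) = 0 := by
        apply Finset.sum_eq_zero
        intro h _
        exact if_neg (by rw [cnt_zero']; omega)
      rw [h1, h2, mul_zero]
  | succ n ih =>
      rw [pD_succ hv hc n m, pG_succ hv hc n m, ih, pY_eq hv hc hiS n m, mul_add]

lemma pG_split (n m : ℕ) :
    pG P i d n m = pD P i d n m + pG P i d n (m + 1) + pA P i d n m := by
  unfold pG pD pA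
  rw [← Finset.sum_add_distrib, ← Finset.sum_add_distrib]
  apply Finset.sum_congr rfl
  intro h _
  by_cases h1 : m + 1 ≤ cnt i h
  · rw [if_pos (by omega), if_pos h1, if_neg (by rintro ⟨-, hm⟩; omega),
      if_neg (by rintro ⟨-, hm⟩; omega), zero_add, add_zero]
  · by_cases h2 : cnt i h = m
    · rw [if_pos (by omega), if_neg h1]
      by_cases hd : dead i h
      · rw [if_pos ⟨hd, h2⟩, if_neg (by rintro ⟨hnd, -⟩; exact hnd hd), add_zero, add_zero]
      · rw [if_neg (by rintro ⟨hd', -⟩; exact hd hd'), if_pos ⟨hd, h2⟩, zero_add, zero_add]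
    · rw [if_neg (by omega), if_neg h1, if_neg (by rintro ⟨-, hm⟩; exact h2 hm),
        if_neg (by rintro ⟨-, hm⟩; exact h2 hm), add_zero, add_zero]

lemma pG_zero (hv : ∀ j, 0 < v j) (hc : Hchoice P v d S) (n : ℕ) : pG P i d n 0 = 1 := by
  unfold pG
  simp only [Nat.zero_le, if_true]
  exact sum_p hv hc n

lemma pA_le_pAl (n m : ℕ) : pA P i d n m ≤ pAl P i d n := by
  apply Finset.sum_le_sum
  intro h _
  by_cases hd : ¬ dead i h ∧ cnt i h = m
  · rw [if_pos hd, if_pos hd.1]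
  · rw [if_neg hd]
    split <;> simp

lemma pAl_succ_le (hv : ∀ j, 0 < v j) (hc : Hchoice P v d S) (hiS : ∀ n h, i ∈ S n h) (n : ℕ) :
    pAl P i d (n + 1)
      ≤ ENNReal.ofReal (1 - v i / (1 + ∑ j : Fin N, v j)) * pAl P i d n := by
  set T := ∑ j : Fin N, v j with hT
  have hTpos : 0 < 1 + T := by
    have : 0 ≤ T := Finset.sum_nonneg fun j _ => (hv j).le
    linarith
  unfold pAl
  rw [sum_succ, Finset.mul_sum]
  apply Finset.sum_le_sum
  intro h _
  by_cases hd : dead i h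
  · have hz : ∀ x : Option (Fin N),
        (if ¬ dead i (Fin.snoc h x) then P (cyl d (n + 1) (Fin.snoc h x)) else 0) = 0 :=
      fun x => if_neg (not_not_intro ((dead_snoc i h x).2 (Or.inl hd)))
    rw [Finset.sum_congr rfl fun x _ => hz x, Finset.sum_const_zero,
      if_neg (not_not_intro hd), mul_zero]
  · rw [if_pos hd]
    set V := ∑ k ∈ S n h, v k with hV
    have hVpos : 0 < 1 + V := Vpos hv n h
    have hVT : V ≤ T := by
      apply Finset.sum_le_sum_of_subset_of_nonneg (Finset.subset_univ _)
      intro j _ _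
      exact (hv j).le
    have key : ∀ x : Option (Fin N),
        (if ¬ dead i (Fin.snoc h x) then P (cyl d (n + 1) (Fin.snoc h x)) else 0)
          = if x ≠ some i then P (cyl d (n + 1) (Fin.snoc h x)) else 0 := by
      intro x
      congr 1
      apply propext
      rw [dead_snoc]
      simp [hd]
    rw [Finset.sum_congr rfl fun x _ => key x]
    rw [Fintype.sum_option]
    rw [if_pos (by simp), p_snoc_none hc n h]
    have hsome : ∀ j : Fin N,
        (if some j ≠ some i then P (cyl d (n + 1) (Fin.snoc h (some j))) else 0)
          = ENNReal.ofReal (if j ≠ i then (if j ∈ S n h then v j else 0) / (1 + V) else 0)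
              * P (cyl d n h) := by
      intro j
      by_cases hj : j = i
      · simp [hj]
      · rw [if_pos (by simpa using hj), if_pos hj, p_snoc_some hc n h j]
    rw [Finset.sum_congr rfl fun j _ => hsome j, ← Finset.sum_mul, ← add_mul]
    have hnn : ∀ j ∈ (univ : Finset (Fin N)),
        0 ≤ if j ≠ i then (if j ∈ S n h then v j else 0) / (1 + V) else 0 := by
      intro j _
      split
      · apply div_nonneg _ hVpos.le
        split <;> [exact (hv j).le; rfl]
      · rfl
    rw [← ENNReal.ofReal_sum_of_nonneg hnn,
      ← ENNReal.ofReal_add (by positivity) (Finset.sum_nonneg hnn)]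
    apply mul_le_mul_left
    apply ENNReal.ofReal_le_ofReal
    -- real inequality
    have hsum_ne : (∑ j : Fin N, if j ≠ i then (if j ∈ S n h then v j else 0) / (1 + V) else 0)
        = (V - v i) / (1 + V) := by
      have : ∀ j : Fin N, (if j ≠ i then (if j ∈ S n h then v j else 0) / (1 + V) else 0)
          = (if j ≠ i then (if j ∈ S n h then v j else 0) else 0) / (1 + V) := by
        intro j; split <;> simp
      rw [Finset.sum_congr rfl fun j _ => this j, ← Finset.sum_div]
      congr 1
      rw [← Finset.sum_filter, Finset.filter_ne', Finset.sum_erase_eq_sub (Finset.mem_univ i),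
        Finset.sum_ite_mem, Finset.univ_inter, if_pos (hiS n h)]
    rw [hsum_ne, ← add_div]
    rw [div_le_iff₀ hVpos]
    have h1 : v i / (1 + T) * (1 + T) = v i := div_mul_cancel₀ _ hTpos.ne'
    have h2 : 0 ≤ v i / (1 + T) := div_nonneg (hv i).le hTpos.le
    nlinarith [mul_nonneg h2 (sub_nonneg.2 hVT)]

lemma pAl_le (hv : ∀ j, 0 < v j) (hc : Hchoice P v d S) (hiS : ∀ n h, i ∈ S n h) (n : ℕ) :
    pAl P i d n ≤ ENNReal.ofReal ((1 - v i / (1 + ∑ j : Fin N, v j)) ^ n) := by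
  have hTpos : 0 < 1 + ∑ j : Fin N, v j := by
    have : 0 ≤ ∑ j : Fin N, v j := Finset.sum_nonneg fun j _ => (hv j).le
    linarith
  have hδ1 : v i / (1 + ∑ j : Fin N, v j) ≤ 1 := by
    rw [div_le_one hTpos]
    have : v i ≤ ∑ j : Fin N, v j :=
      Finset.single_le_sum (fun j _ => (hv j).le) (Finset.mem_univ i)
    linarith
  have hnn : 0 ≤ 1 - v i / (1 + ∑ j : Fin N, v j) := by linarith
  induction n with
  | zero =>
      simp only [pow_zero, ENNReal.ofReal_one]
      calc pAl P i d 0 ≤ ∑ h : Fin 0 → Option (Fin N), P (cyl d 0 h) := by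
            apply Finset.sum_le_sum; intro h _; split <;> simp
      _ = 1 := sum_p hv hc 0
  | succ n ih =>
      calc pAl P i d (n + 1)
          ≤ ENNReal.ofReal (1 - v i / (1 + ∑ j : Fin N, v j)) * pAl P i d n :=
            pAl_succ_le hv hc hiS n
      _ ≤ ENNReal.ofReal (1 - v i / (1 + ∑ j : Fin N, v j))
            * ENNReal.ofReal ((1 - v i / (1 + ∑ j : Fin N, v j)) ^ n) := by gcongr
      _ = ENNReal.ofReal ((1 - v i / (1 + ∑ j : Fin N, v j)) ^ (n + 1)) := by
            rw [← ENNReal.ofReal_mul hnn, ← pow_succ']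

def DLev (i : Fin N) (d : ℕ → Ω → Option (Fin N)) (n m : ℕ) : Set Ω :=
  {ω | dead i (histOf d n ω) ∧ cnt i (histOf d n ω) = m}

def GLev (i : Fin N) (d : ℕ → Ω → Option (Fin N)) (n m : ℕ) : Set Ω :=
  {ω | m ≤ cnt i (histOf d n ω)}

def ALs (i : Fin N) (d : ℕ → Ω → Option (Fin N)) (n : ℕ) : Set Ω :=
  {ω | ¬ dead i (histOf d n ω)}

def Dset (i : Fin N) (d : ℕ → Ω → Option (Fin N)) (m : ℕ) : Set Ω := ⋃ n, DLev i d n m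

def Gset (i : Fin N) (d : ℕ → Ω → Option (Fin N)) (m : ℕ) : Set Ω := ⋃ n, GLev i d n m

def NeverI (i : Fin N) (d : ℕ → Ω → Option (Fin N)) : Set Ω := {ω | ∀ n, d n ω ≠ some i}

lemma P_of_level (hv : ∀ j, 0 < v j) (hc : Hchoice P v d S) (n : ℕ)
    (q : (Fin n → Option (Fin N)) → Prop) [DecidablePred q] :
    P {ω | q (histOf d n ω)}
      = ∑ h : Fin n → Option (Fin N), if q h then P (cyl d n h) else 0 := by
  have hset : {ω | q (histOf d n ω)} = ⋃ h ∈ Finset.univ.filter q, cyl d n h := by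
    ext ω
    simp only [Set.mem_setOf_eq, Set.mem_iUnion, Finset.mem_filter, Finset.mem_univ, true_and,
      mem_cyl, exists_prop]
    constructor
    · intro hq; exact ⟨histOf d n ω, hq, rfl⟩
    · rintro ⟨h, hq, heq⟩; rw [heq]; exact hq
  rw [hset, p_biUnion hv hc, Finset.sum_filter]

lemma P_DL (hv : ∀ j, 0 < v j) (hc : Hchoice P v d S) (n m : ℕ) :
    P (DLev i d n m) = pD P i d n m :=
  P_of_level hv hc n (fun h => dead i h ∧ cnt i h = m)

lemma P_GL (hv : ∀ j, 0 < v j) (hc : Hchoice P v d S) (n m : ℕ) :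
    P (GLev i d n m) = pG P i d n m :=
  P_of_level hv hc n (fun h => m ≤ cnt i h)

lemma P_ALs (hv : ∀ j, 0 < v j) (hc : Hchoice P v d S) (n : ℕ) :
    P (ALs i d n) = pAl P i d n :=
  P_of_level hv hc n (fun h => ¬ dead i h)

lemma DL_mono (m : ℕ) : Monotone fun n => DLev i d n m := by
  apply monotone_nat_of_le_succ
  intro n ω hω
  obtain ⟨hd, hcnt⟩ := hω
  constructor
  · rw [histOf_succ]
    exact (dead_snoc i _ _).2 (Or.inl hd)
  · rw [histOf_succ, cnt_snoc_of_dead i hd, hcnt]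

lemma GL_mono (m : ℕ) : Monotone fun n => GLev i d n m := by
  apply monotone_nat_of_le_succ
  intro n ω hω
  have : m ≤ cnt i (histOf d n ω) := hω
  show m ≤ cnt i (histOf d (n + 1) ω)
  rw [histOf_succ, cnt_snoc]
  exact le_trans this (Nat.le_add_right _ _)

lemma P_Dset (hv : ∀ j, 0 < v j) (hc : Hchoice P v d S) (hiS : ∀ n h, i ∈ S n h) (m : ℕ) :
    P (Dset i d m) = ENNReal.ofReal (v i) * P (Gset i d (m + 1)) := by
  rw [Dset, Gset, (DL_mono m).measure_iUnion, (GL_mono (m + 1)).measure_iUnion,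
    ENNReal.mul_iSup]
  apply iSup_congr
  intro n
  rw [P_DL hv hc, P_GL hv hc, pDG hv hc hiS]

lemma tendsto_pA (hv : ∀ j, 0 < v j) (hc : Hchoice P v d S) (hiS : ∀ n h, i ∈ S n h) (m : ℕ) :
    Tendsto (fun n => pA P i d n m) atTop (𝓝 0) := by
  have hTpos : 0 < 1 + ∑ j : Fin N, v j := by
    have : 0 ≤ ∑ j : Fin N, v j := Finset.sum_nonneg fun j _ => (hv j).le
    linarith
  have hδpos : 0 < v i / (1 + ∑ j : Fin N, v j) := div_pos (hv i) hTpos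
  have hδ1 : v i / (1 + ∑ j : Fin N, v j) ≤ 1 := by
    rw [div_le_one hTpos]
    have : v i ≤ ∑ j : Fin N, v j :=
      Finset.single_le_sum (fun j _ => (hv j).le) (Finset.mem_univ i)
    linarith
  have hup : Tendsto (fun n : ℕ => ENNReal.ofReal ((1 - v i / (1 + ∑ j : Fin N, v j)) ^ n))
      atTop (𝓝 0) := by
    have hre : Tendsto (fun n : ℕ => (1 - v i / (1 + ∑ j : Fin N, v j)) ^ n) atTop (𝓝 0) := by
      apply tendsto_pow_atTop_nhds_zero_of_lt_one (by linarith) (by linarith)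
    have := ENNReal.tendsto_ofReal hre
    rwa [ENNReal.ofReal_zero] at this
  apply tendsto_of_tendsto_of_tendsto_of_le_of_le tendsto_const_nhds hup
  · intro n; exact zero_le
  · intro n; exact le_trans (pA_le_pAl n m) (pAl_le hv hc hiS n)

lemma P_Gset_rec (hv : ∀ j, 0 < v j) (hc : Hchoice P v d S) (hiS : ∀ n h, i ∈ S n h) (m : ℕ) :
    P (Gset i d m) = P (Dset i d m) + P (Gset i d (m + 1)) := by
  have tG : Tendsto (fun n => pG P i d n m) atTop (𝓝 (P (Gset i d m))) := by
    have := tendsto_measure_iUnion_atTop (μ := P) (GL_mono (i := i) (d := d) m)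
    simpa only [Function.comp_def, P_GL hv hc, Gset] using this
  have tG' : Tendsto (fun n => pG P i d n (m + 1)) atTop (𝓝 (P (Gset i d (m + 1)))) := by
    have := tendsto_measure_iUnion_atTop (μ := P) (GL_mono (i := i) (d := d) (m + 1))
    simpa only [Function.comp_def, P_GL hv hc, Gset] using this
  have tD : Tendsto (fun n => pD P i d n m) atTop (𝓝 (P (Dset i d m))) := by
    have := tendsto_measure_iUnion_atTop (μ := P) (DL_mono (i := i) (d := d) m)
    simpa only [Function.comp_def, P_DL hv hc, Dset] using this
  have tA := tendsto_pA hv hc hiS m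
  have tsum : Tendsto (fun n => pD P i d n m + pG P i d n (m + 1) + pA P i d n m) atTop
      (𝓝 (P (Dset i d m) + P (Gset i d (m + 1)) + 0)) := (tD.add tG').add tA
  rw [add_zero] at tsum
  have : (fun n => pD P i d n m + pG P i d n (m + 1) + pA P i d n m)
      = fun n => pG P i d n m := by
    funext n
    exact (pG_split n m).symm
  rw [this] at tsum
  exact tendsto_nhds_unique tG tsum

lemma P_Gset_zero (hv : ∀ j, 0 < v j) (hc : Hchoice P v d S) : P (Gset i d 0) = 1 := by
  apply le_antisymm prob_le_one
  have : Set.univ ⊆ Gset i d 0 := fun ω _ => Set.mem_iUnion.2 ⟨0, Nat.zero_le _⟩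
  calc (1 : ℝ≥0∞) = P Set.univ := measure_univ.symm
  _ ≤ P (Gset i d 0) := measure_mono this

lemma P_Gset_eq (hv : ∀ j, 0 < v j) (hc : Hchoice P v d S) (hiS : ∀ n h, i ∈ S n h) (m : ℕ) :
    P (Gset i d m) = ENNReal.ofReal ((1 / (1 + v i)) ^ m) := by
  have h1vi : 0 < 1 + v i := by linarith [hv i]
  induction m with
  | zero => rw [pow_zero, ENNReal.ofReal_one, P_Gset_zero hv hc]
  | succ m ih =>
      have hrec := P_Gset_rec hv hc hiS m
      rw [P_Dset hv hc hiS m, ih] at hrec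
      have hfac : ENNReal.ofReal (v i) * P (Gset i d (m + 1)) + P (Gset i d (m + 1))
          = ENNReal.ofReal (1 + v i) * P (Gset i d (m + 1)) := by
        have h1 : ENNReal.ofReal (1 + v i) = ENNReal.ofReal (v i) + 1 := by
          rw [← ENNReal.ofReal_one, ← ENNReal.ofReal_add (hv i).le zero_le_one, add_comm]
        rw [h1, add_mul, one_mul]
      rw [hfac] at hrec
      have hmul : ENNReal.ofReal (1 + v i) * ENNReal.ofReal ((1 / (1 + v i)) ^ (m + 1))
          = ENNReal.ofReal ((1 / (1 + v i)) ^ m) := by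
        rw [← ENNReal.ofReal_mul (by linarith)]
        congr 1
        rw [pow_succ]
        field_simp
      exact (ENNReal.mul_right_inj (ENNReal.ofReal_pos.2 h1vi).ne' ENNReal.ofReal_ne_top).1
        (hrec.symm.trans hmul.symm)

lemma P_Dset_eq (hv : ∀ j, 0 < v j) (hc : Hchoice P v d S) (hiS : ∀ n h, i ∈ S n h) (m : ℕ) :
    P (Dset i d m) = ENNReal.ofReal ((1 / (1 + v i)) ^ m * (v i / (1 + v i))) := by
  have h1vi : 0 < 1 + v i := by linarith [hv i]
  rw [P_Dset hv hc hiS m, P_Gset_eq hv hc hiS (m + 1),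
    ← ENNReal.ofReal_mul (hv i).le]
  congr 1
  rw [pow_succ]
  ring

lemma P_NeverI (hv : ∀ j, 0 < v j) (hc : Hchoice P v d S) (hiS : ∀ n h, i ∈ S n h) :
    P (NeverI i d) = 0 := by
  have hsub : ∀ n, NeverI i d ⊆ ALs i d n := by
    intro n ω hω
    rw [ALs, Set.mem_setOf_eq, not_dead_iff]
    intro k
    exact hω k.1
  have hle : ∀ n : ℕ, P (NeverI i d)
      ≤ ENNReal.ofReal ((1 - v i / (1 + ∑ j : Fin N, v j)) ^ n) := by
    intro n
    calc P (NeverI i d) ≤ P (ALs i d n) := measure_mono (hsub n)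
    _ = pAl P i d n := P_ALs hv hc n
    _ ≤ _ := pAl_le hv hc hiS n
  have hTpos : 0 < 1 + ∑ j : Fin N, v j := by
    have : 0 ≤ ∑ j : Fin N, v j := Finset.sum_nonneg fun j _ => (hv j).le
    linarith
  have hδpos : 0 < v i / (1 + ∑ j : Fin N, v j) := div_pos (hv i) hTpos
  have hδ1 : v i / (1 + ∑ j : Fin N, v j) ≤ 1 := by
    rw [div_le_one hTpos]
    have : v i ≤ ∑ j : Fin N, v j :=
      Finset.single_le_sum (fun j _ => (hv j).le) (Finset.mem_univ i)
    linarith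
  have hup : Tendsto (fun n : ℕ => ENNReal.ofReal ((1 - v i / (1 + ∑ j : Fin N, v j)) ^ n))
      atTop (𝓝 0) := by
    have hre : Tendsto (fun n : ℕ => (1 - v i / (1 + ∑ j : Fin N, v j)) ^ n) atTop (𝓝 0) :=
      tendsto_pow_atTop_nhds_zero_of_lt_one (by linarith) (by linarith)
    have := ENNReal.tendsto_ofReal hre
    rwa [ENNReal.ofReal_zero] at this
  exact le_antisymm (ge_of_tendsto' hup hle) zero_le

lemma cnt_eq_ncard (ω : Ω) (n : ℕ) (hd : dead i (histOf d n ω)) :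
    cnt i (histOf d n ω) = Set.ncard {k : ℕ | d k ω = none ∧ ∀ m ≤ k, d m ω ≠ some i} := by
  have hex : ∃ k, d k ω = some i := by
    obtain ⟨k, hk⟩ := hd
    exact ⟨k.1, hk⟩
  set n₀ := Nat.find hex with hn₀def
  have hn₀ : d n₀ ω = some i := Nat.find_spec hex
  have hmin : ∀ k < n₀, d k ω ≠ some i := fun k hk => Nat.find_min hex hk
  have hn₀n : n₀ < n := by
    obtain ⟨k, hk⟩ := hd
    exact lt_of_le_of_lt (Nat.find_le hk) k.2
  have hset : {k : ℕ | d k ω = none ∧ ∀ m ≤ k, d m ω ≠ some i}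
      = ↑((Finset.range n₀).filter fun k => d k ω = none) := by
    ext k
    simp only [Set.mem_setOf_eq, Finset.coe_filter, Finset.mem_range]
    constructor
    · rintro ⟨h1, h2⟩
      refine ⟨?_, h1⟩
      by_contra hk
      exact h2 n₀ (le_of_not_gt hk) hn₀
    · rintro ⟨hk, h1⟩
      exact ⟨h1, fun m hm => hmin m (lt_of_le_of_lt hm hk)⟩
  rw [hset, Set.ncard_coe_finset, Finset.card_filter]
  unfold cnt
  have hterm : ∀ k : Fin n,
      (if histOf d n ω k = none ∧ (∀ k' ≤ k, histOf d n ω k' ≠ some i) then 1 else 0)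
        = (fun j : ℕ => if j < n₀ ∧ d j ω = none then 1 else 0) k.1 := by
    intro k
    congr 1
    apply propext
    constructor
    · rintro ⟨h1, h2⟩
      refine ⟨?_, h1⟩
      by_contra hk
      have hkle : n₀ ≤ k.1 := le_of_not_gt hk
      exact h2 ⟨n₀, lt_of_le_of_lt hkle k.2⟩ hkle hn₀
    · rintro ⟨hk, h1⟩
      exact ⟨h1, fun k' hk' => hmin k'.1 (lt_of_le_of_lt hk' hk)⟩
  rw [Finset.sum_congr rfl fun k _ => hterm k,
    Fin.sum_univ_eq_sum_range (fun j => if j < n₀ ∧ d j ω = none then 1 else 0) n]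
  rw [← Finset.sum_subset (Finset.range_subset_range.2 hn₀n.le)
    (fun j _ hj => if_neg (fun hh => hj (Finset.mem_range.2 hh.1)))]
  apply Finset.sum_congr rfl
  intro j hj
  rw [Finset.mem_range] at hj
  congr 1
  apply propext
  exact and_iff_right hj

lemma Dset_subset (m : ℕ) :
    Dset i d m ⊆ {ω | Set.ncard {k : ℕ | d k ω = none ∧ ∀ m' ≤ k, d m' ω ≠ some i} = m} := by
  intro ω hω
  obtain ⟨n, hd, hcnt⟩ : ∃ n, dead i (histOf d n ω) ∧ cnt i (histOf d n ω) = m := by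
    obtain ⟨s, ⟨n, rfl⟩, hs⟩ := hω
    exact ⟨n, hs⟩
  show Set.ncard _ = m
  rw [← cnt_eq_ncard ω n hd, hcnt]

lemma subset_Dset (m : ℕ) :
    {ω | Set.ncard {k : ℕ | d k ω = none ∧ ∀ m' ≤ k, d m' ω ≠ some i} = m}
      ⊆ Dset i d m ∪ NeverI i d := by
  intro ω hω
  by_cases hne : ∀ n, d n ω ≠ some i
  · exact Or.inr hne
  · push_neg at hne
    obtain ⟨k, hk⟩ := hne
    left
    have hd : dead i (histOf d (k + 1) ω) := ⟨⟨k, Nat.lt_succ_self k⟩, hk⟩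
    refine Set.mem_iUnion.2 ⟨k + 1, ⟨hd, ?_⟩⟩
    rw [cnt_eq_ncard ω (k + 1) hd]
    exact hω

lemma P_mu_eq (hv : ∀ j, 0 < v j) (hc : Hchoice P v d S) (hiS : ∀ n h, i ∈ S n h)
    (μi : Ω → ℕ)
    (hμi : ∀ ω, μi ω = Set.ncard {k : ℕ | d k ω = none ∧ ∀ m ≤ k, d m ω ≠ some i}) (m : ℕ) :
    P {ω | μi ω = m} = ENNReal.ofReal ((1 / (1 + v i)) ^ m * (v i / (1 + v i))) := by
  have hsetEq : {ω | μi ω = m}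
      = {ω | Set.ncard {k : ℕ | d k ω = none ∧ ∀ m' ≤ k, d m' ω ≠ some i} = m} := by
    ext ω
    rw [Set.mem_setOf_eq, hμi ω]
    rfl
  rw [hsetEq, ← P_Dset_eq hv hc hiS m]
  apply le_antisymm
  · calc P _ ≤ P (Dset i d m ∪ NeverI i d) := measure_mono (subset_Dset m)
    _ ≤ P (Dset i d m) + P (NeverI i d) := measure_union_le _ _
    _ = P (Dset i d m) := by rw [P_NeverI hv hc hiS, add_zero]
  · exact measure_mono (Dset_subset m)

end Meas

lemma integral_geom {Ω : Type*} [MeasurableSpace Ω] (P : Measure Ω) [IsProbabilityMeasure P]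
    (f : Ω → ℕ) (c : ℝ) (hc : 0 < c)
    (hP : ∀ m : ℕ, P {ω | f ω = m} = ENNReal.ofReal ((1 / (1 + c)) ^ m * (c / (1 + c)))) :
    ∫ ω, (f ω : ℝ) ∂P = 1 / c := by
  have h1c : (0 : ℝ) < 1 + c := by linarith
  set r : ℝ := 1 / (1 + c) with hrdef
  have hr0 : 0 ≤ r := by positivity
  have hr1 : r < 1 := by
    rw [hrdef, div_lt_one h1c]
    linarith
  have h1r : 1 - r = c / (1 + c) := by
    rw [hrdef]
    field_simp
    ring
  set q : ℕ → ℝ := fun m => r ^ m * (c / (1 + c)) with hqdef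
  have hq0 : ∀ m, 0 ≤ q m := fun m => by positivity
  set T : ℕ → Set Ω := fun m => toMeasurable P {ω | f ω = m} with hTdef
  set W : ℕ → Set Ω := disjointed T with hWdef
  have hTmeas : ∀ m, MeasurableSet (T m) := fun m => measurableSet_toMeasurable _ _
  have hWmeas : ∀ m, MeasurableSet (W m) := MeasurableSet.disjointed hTmeas
  have hWdisj : Pairwise (Function.onFun Disjoint W) := disjoint_disjointed T
  have hWT : ∀ m, W m ⊆ T m := disjointed_subset T
  have hPT : ∀ m, P (T m) = ENNReal.ofReal (q m) := fun m => by
    rw [hTdef, measure_toMeasurable, hP m]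
  have hUnionW : (⋃ m, W m) = Set.univ := by
    rw [hWdef, iUnion_disjointed]
    apply Set.eq_univ_of_forall
    intro ω
    exact Set.mem_iUnion.2 ⟨f ω, subset_toMeasurable P _ rfl⟩
  have hsum_q : ∑' m : ℕ, ENNReal.ofReal (q m) = 1 := by
    have hsummable : Summable q := (summable_geometric_of_lt_one hr0 hr1).mul_right _
    rw [← ENNReal.ofReal_tsum_of_nonneg hq0 hsummable]
    have hq1 : ∑' m : ℕ, q m = 1 := by
      rw [hqdef]
      rw [tsum_mul_right, tsum_geometric_of_lt_one hr0 hr1, ← h1r]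
      have : 1 - r ≠ 0 := by
        rw [h1r]
        positivity
      field_simp
    rw [hq1, ENNReal.ofReal_one]
  have hsumW : ∑' m : ℕ, P (W m) = 1 := by
    rw [← measure_iUnion hWdisj hWmeas, hUnionW, measure_univ]
  have hPW : ∀ m, P (W m) = ENNReal.ofReal (q m) := by
    intro m
    by_contra hne
    have hle : ∀ k, P (W k) ≤ ENNReal.ofReal (q k) := fun k =>
      le_trans (measure_mono (hWT k)) (le_of_eq (hPT k))
    have hlt : P (W m) < ENNReal.ofReal (q m) := lt_of_le_of_ne (hle m) hne
    have hcontra : (1 : ℝ≥0∞) < 1 := by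
      calc (1 : ℝ≥0∞) = ∑' k, P (W k) := hsumW.symm
      _ < ∑' k, ENNReal.ofReal (q k) :=
          ENNReal.tsum_lt_tsum (hsumW.trans_ne (by simp)) hle hlt
      _ = 1 := hsum_q
    exact lt_irrefl _ hcontra
  set F : Ω → ℕ := fun ω => sInf {m | ω ∈ W m} with hFdef
  have hFW : ∀ ω m, ω ∈ W m → F ω = m := by
    intro ω m hm
    have hne : {m' | ω ∈ W m'}.Nonempty := ⟨m, hm⟩
    have hmem : ω ∈ W (F ω) := Nat.sInf_mem hne
    by_contra hFm
    exact Set.disjoint_left.1 (hWdisj hFm) hmem hm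
  have hFmem : ∀ ω, ω ∈ W (F ω) := by
    intro ω
    have hm : ω ∈ ⋃ m, W m := hUnionW ▸ Set.mem_univ ω
    obtain ⟨m, hm⟩ := Set.mem_iUnion.1 hm
    rw [hFW ω m hm]
    exact hm
  have hFmeas : Measurable F := by
    apply measurable_to_countable'
    intro m
    have : F ⁻¹' {m} = W m := by
      ext ω
      simp only [Set.mem_preimage, Set.mem_singleton_iff]
      constructor
      · intro h; rw [← h]; exact hFmem ω
      · exact hFW ω m
    rw [this]
    exact hWmeas m
  have haeN : ∀ᵐ ω ∂P, f ω = F ω := by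
    rw [ae_iff]
    apply measure_mono_null (t := ⋃ m, ({ω | f ω = m} \ W m))
    · intro ω hω
      refine Set.mem_iUnion.2 ⟨f ω, rfl, ?_⟩
      intro hmem
      exact hω (by rw [hFW ω (f ω) hmem])
    · apply measure_iUnion_null
      intro m
      apply measure_mono_null (t := T m \ W m)
      · exact Set.diff_subset_diff_left (subset_toMeasurable P _)
      · rw [measure_diff (hWT m) (hWmeas m).nullMeasurableSet
          (by rw [hPW m]; exact ENNReal.ofReal_ne_top), hPT m, hPW m, tsub_self]
  have hae : (fun ω => (f ω : ℝ)) =ᵐ[P] fun ω => (F ω : ℝ) :=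
    haeN.mono fun ω h => congrArg Nat.cast h
  rw [integral_congr_ae hae]
  have hFmR : Measurable fun ω => (F ω : ℝ) := (measurable_of_countable _).comp hFmeas
  rw [integral_eq_lintegral_of_nonneg_ae (Filter.Eventually.of_forall fun ω => by positivity)
    hFmR.aestronglyMeasurable]
  have hlin : ∫⁻ ω, ENNReal.ofReal ((F ω : ℝ)) ∂P = ∑' m : ℕ, (m : ℝ≥0∞) * P (W m) := by
    have heq : (fun ω => ENNReal.ofReal ((F ω : ℝ)))
        = fun ω => ∑' m : ℕ, (W m).indicator (fun _ => (m : ℝ≥0∞)) ω := by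
      funext ω
      rw [ENNReal.ofReal_natCast]
      rw [tsum_eq_single (F ω) fun b hb =>
        Set.indicator_of_notMem (fun hmem => hb (hFW ω b hmem).symm) _]
      rw [Set.indicator_of_mem (hFmem ω)]
    rw [heq, lintegral_tsum fun m => (measurable_const.indicator (hWmeas m)).aemeasurable]
    exact tsum_congr fun m => lintegral_indicator_const (hWmeas m) _
  have hval : ∑' m : ℕ, (m : ℝ≥0∞) * P (W m) = ENNReal.ofReal (1 / c) := by
    have h1 : ∀ m : ℕ, (m : ℝ≥0∞) * P (W m) = ENNReal.ofReal ((m : ℝ) * q m) := by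
      intro m
      rw [hPW m, ← ENNReal.ofReal_natCast m, ← ENNReal.ofReal_mul (Nat.cast_nonneg m)]
    rw [tsum_congr h1]
    have hrnorm : ‖r‖ < 1 := by rwa [Real.norm_eq_abs, abs_of_nonneg hr0]
    have hsummable : Summable (fun m : ℕ => (m : ℝ) * q m) := by
      have hs : Summable (fun m : ℕ => (m : ℝ) * r ^ m) := by
        have := summable_pow_mul_geometric_of_norm_lt_one 1 hrnorm
        simpa using this
      apply (hs.mul_right (c / (1 + c))).congr
      intro m
      simp only [hqdef]
      ring
    rw [← ENNReal.ofReal_tsum_of_nonneg (fun m => mul_nonneg (Nat.cast_nonneg m) (hq0 m))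
      hsummable]
    congr 1
    have hts : ∑' m : ℕ, (m : ℝ) * q m = (∑' m : ℕ, (m : ℝ) * r ^ m) * (c / (1 + c)) := by
      rw [← tsum_mul_right]
      exact tsum_congr fun m => by simp only [hqdef]; ring
    rw [hts, tsum_coe_mul_geometric_of_norm_lt_one hrnorm, h1r, hrdef, div_pow]
    field_simp
  rw [hlin, hval, ENNReal.toReal_ofReal (by positivity)]


end Stmt0


/-- In an MNL choice model with history-dependent assortments all
containing product `i`, the number of no-purchases strictly before the first
purchase of product `i` is geometric with parameter `v i / (1 + v i)` and has
mean `1 / v i`. -/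
theorem stmt_0
    {Ω : Type*} [MeasurableSpace Ω] (P : Measure Ω) [IsProbabilityMeasure P]
    (N : ℕ) (v : Fin N → ℝ) (hv : ∀ j, 0 < v j) (i : Fin N)
    (d : ℕ → Ω → Option (Fin N))
    (S : (n : ℕ) → (Fin n → Option (Fin N)) → Finset (Fin N))
    (hiS : ∀ n h, i ∈ S n h)
    (hchoice : ∀ (n : ℕ) (h : Fin n → Option (Fin N)),
      (∀ j : Fin N,
        P {ω | d n ω = some j ∧ ∀ k : Fin n, d k.1 ω = h k}
          = ENNReal.ofReal ((if j ∈ S n h then v j else 0) / (1 + ∑ k ∈ S n h, v k))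
              * P {ω | ∀ k : Fin n, d k.1 ω = h k})
      ∧ P {ω | d n ω = none ∧ ∀ k : Fin n, d k.1 ω = h k}
          = ENNReal.ofReal (1 / (1 + ∑ k ∈ S n h, v k))
              * P {ω | ∀ k : Fin n, d k.1 ω = h k})
    (μi : Ω → ℕ)
    (hμi : ∀ ω, μi ω = Set.ncard {k : ℕ | d k ω = none ∧ ∀ m ≤ k, d m ω ≠ some i}) :
    (∀ m : ℕ,
      P {ω | μi ω = m}
        = ENNReal.ofReal ((1 / (1 + v i)) ^ m * (v i / (1 + v i))))
    ∧ ∫ ω, (μi ω : ℝ) ∂P = 1 / v i := by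
  have hc : Stmt0.Hchoice P v d S := hchoice
  constructor
  · intro m
    exact Stmt0.P_mu_eq hv hc hiS μi hμi m
  · exact Stmt0.integral_geom P μi (v i) (hv i) fun m => Stmt0.P_mu_eq hv hc hiS μi hμi m
end

section
/- Consider the single-customer MNL expected revenue Ř(S; v, r) = Σ_{i∈S} r_i v_i / (1 + Σ_{j∈S} v_j) for an assortment S ⊆ [N], attraction parameters v ∈ (0,∞)^N, and profits r ∈ [0,1]^N. If v ≤ v' componentwise, then max_{S ∈ 𝒮} Ř(S; v, r) ≤ max_{S ∈ 𝒮} Ř(S; v', r) for any family 𝒮 of assortments closed under taking subsets. More precisely, for any fixed S, if v'_i ≥ v_i for a single coordinate i ∈ S and Ř(S; v, r) ≤ r_i, then Ř(S; v', r) ≥ Ř(S; v, r). -/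
/-- Single-customer MNL expected revenue of assortment `S` with attraction
parameters `v` and unit profits `r` (no-purchase attraction normalized to 1). -/
noncomputable def mnlRev (N : ℕ) (S : Finset (Fin N)) (v r : Fin N → ℝ) : ℝ :=
  (∑ i ∈ S, r i * v i) / (1 + ∑ j ∈ S, v j)

lemma mnl_denom_pos (N : ℕ) (S : Finset (Fin N)) (v : Fin N → ℝ) (hv : ∀ j, 0 < v j) :
    0 < 1 + ∑ j ∈ S, v j := by
  have : (0:ℝ) ≤ ∑ j ∈ S, v j := Finset.sum_nonneg fun j _ => (hv j).le
  linarith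

lemma mnl_key (N : ℕ) (S : Finset (Fin N)) (v v' r : Fin N → ℝ)
    (hv : ∀ j, 0 < v j) (hv' : ∀ j ∈ S, v j ≤ v' j)
    (h : ∀ j ∈ S, mnlRev N S v r * (v' j - v j) ≤ r j * (v' j - v j)) :
    mnlRev N S v r ≤ mnlRev N S v' r := by
  have hD : 0 < 1 + ∑ j ∈ S, v j := mnl_denom_pos N S v hv
  have hVV : (∑ j ∈ S, v j) ≤ ∑ j ∈ S, v' j := Finset.sum_le_sum hv'
  have hD' : 0 < 1 + ∑ j ∈ S, v' j := by linarith
  set A := ∑ i ∈ S, r i * v i with hA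
  set A' := ∑ i ∈ S, r i * v' i with hA'
  set V := ∑ j ∈ S, v j with hV
  set V' := ∑ j ∈ S, v' j with hV'
  have hsum : mnlRev N S v r * (V' - V) ≤ A' - A := by
    have h1 : mnlRev N S v r * (V' - V) = ∑ j ∈ S, mnlRev N S v r * (v' j - v j) := by
      rw [hV, hV', ← Finset.sum_sub_distrib, Finset.mul_sum]
    have h2 : A' - A = ∑ j ∈ S, r j * (v' j - v j) := by
      rw [hA, hA', ← Finset.sum_sub_distrib]
      exact Finset.sum_congr rfl (fun j _ => by ring)
    rw [h1, h2]
    exact Finset.sum_le_sum h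
  have hRD : mnlRev N S v r * (1 + V) = A := by
    rw [mnlRev, ← hV, ← hA]
    field_simp
  show A / (1 + V) ≤ A' / (1 + V')
  rw [div_le_div_iff₀ hD hD']
  have := mul_le_mul_of_nonneg_right hsum hD.le
  nlinarith [hRD]

/-- monotonicity of the optimal single-customer MNL revenue in
the attraction parameters over a subset-closed family of assortments, and the
key single-coordinate monotonicity step. -/
theorem stmt_12 (N : ℕ) (v v' r : Fin N → ℝ)
    (hv : ∀ j, 0 < v j) (hvv' : ∀ j, v j ≤ v' j)
    (hr0 : ∀ j, 0 ≤ r j) (hr1 : ∀ j, r j ≤ 1)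
    (𝒮 : Finset (Finset (Fin N))) (hne : 𝒮.Nonempty)
    (hclosed : ∀ S ∈ 𝒮, ∀ T ⊆ S, T ∈ 𝒮) :
    ((𝒮.sup' hne fun S => mnlRev N S v r)
        ≤ 𝒮.sup' hne fun S => mnlRev N S v' r)
    ∧ ∀ (S : Finset (Fin N)) (i : Fin N), i ∈ S →
        (∀ j, j ≠ i → v' j = v j) → mnlRev N S v r ≤ r i →
        mnlRev N S v r ≤ mnlRev N S v' r := by
  constructor
  · -- pick a maximizer S*
    obtain ⟨S, hS, hSmax⟩ := Finset.exists_mem_eq_sup' hne (fun S => mnlRev N S v r)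
    rw [hSmax]
    -- every product in S* has r_i ≥ optimal revenue
    have hkey : ∀ i ∈ S, mnlRev N S v r ≤ r i := by
      intro i hi
      have hT : S.erase i ∈ 𝒮 := hclosed S hS _ (Finset.erase_subset i S)
      have hle : mnlRev N (S.erase i) v r ≤ mnlRev N S v r := by
        exact hSmax ▸ Finset.le_sup' (fun S => mnlRev N S v r) hT
      have hD : 0 < 1 + ∑ j ∈ S, v j := mnl_denom_pos N S v hv
      have hDT : 0 < 1 + ∑ j ∈ S.erase i, v j := mnl_denom_pos N _ v hv
      have hsA : ∑ j ∈ S.erase i, r j * v j = (∑ j ∈ S, r j * v j) - r i * v i :=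
        Finset.sum_erase_eq_sub hi
      have hsV : ∑ j ∈ S.erase i, v j = (∑ j ∈ S, v j) - v i :=
        Finset.sum_erase_eq_sub hi
      rw [mnlRev, mnlRev, hsA, hsV, div_le_div_iff₀ (by linarith) hD] at hle
      rw [mnlRev, div_le_iff₀ hD]
      have hvi := hv i
      nlinarith [hle]
    calc mnlRev N S v r ≤ mnlRev N S v' r := by
          apply mnl_key N S v v' r hv (fun j _ => hvv' j)
          intro j hj
          exact mul_le_mul_of_nonneg_right (hkey j hj) (by linarith [hvv' j])
      _ ≤ 𝒮.sup' hne fun S => mnlRev N S v' r := Finset.le_sup' (fun S => mnlRev N S v' r) hS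
  · intro S i hi hother hri
    apply mnl_key N S v v' r hv (fun j _ => hvv' j)
    intro j hj
    by_cases hji : j = i
    · subst hji
      exact mul_le_mul_of_nonneg_right hri (by linarith [hvv' j])
    · rw [hother j hji]
      simp
end
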